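/- arXiv:2407.04891 — 4 statements merged into one kernel-verified Lean document; each statement's English description precedes it below -/
import Mathlib

section
/- Let S be a commutative ring and F a formal group law over S. Then there exists a unique formal power series ι in one variable over S with zero constant coefficient such that F(x, ι(x)) = 0, where ι(x) is substituted into the second variable of F. -/
/- Common setup: substitution of multivariate power series, formal group laws,
formal inverses, and the variable–swapping operation. -/

open MvPowerSeries Finsupp

noncomputable section

variable {S : Type*} [CommRing S]

/-- Substitution of a family of multivariate power series (each intended to have zero
constant coefficient) into a power series in `k` variables.  When every `a j` has zero
constant coefficient, the coefficient of a monomial `m` of the substituted series only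
receives contributions from exponents `d` with `d j ≤ deg m`, so the finite sum below
computes the genuine substitution. -/
noncomputable def msubst {k n : ℕ} (a : Fin k → MvPowerSeries (Fin n) S)
    (F : MvPowerSeries (Fin k) S) : MvPowerSeries (Fin n) S :=
  fun m =>
    ∑ d ∈ Finset.Iic (equivFunOnFinite.symm fun _ : Fin k => m.sum fun _ e => e),
      MvPowerSeries.coeff d F * MvPowerSeries.coeff m (∏ j, a j ^ d j)

/-- `F ∈ S[[x,y]]` is a (one-dimensional, commutative) formal group law over `S`:
zero constant coefficient, commutativity `F(x,y) = F(y,x)`, unitality `F(x,0) = x`,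
and associativity `F(F(x,y),z) = F(x,F(y,z))`. -/
def IsFormalGroupLaw (F : MvPowerSeries (Fin 2) S) : Prop :=
  MvPowerSeries.constantCoeff F = 0 ∧
  msubst ![(X 1 : MvPowerSeries (Fin 2) S), X 0] F = F ∧
  msubst ![(X 0 : MvPowerSeries (Fin 2) S), 0] F = X 0 ∧
  msubst ![msubst ![(X 0 : MvPowerSeries (Fin 3) S), X 1] F, X 2] F
    = msubst ![(X 0 : MvPowerSeries (Fin 3) S), msubst ![(X 1 : MvPowerSeries (Fin 3) S), X 2] F] F

/-- `ι ∈ S[[x]]` is the formal inverse of `F`: it has zero constant coefficient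
and `F(x, ι(x)) = 0`. -/
def IsFormalInverse (F : MvPowerSeries (Fin 2) S) (ι : MvPowerSeries (Fin 1) S) : Prop :=
  MvPowerSeries.constantCoeff ι = 0 ∧
  msubst ![(X 0 : MvPowerSeries (Fin 1) S), ι] F = 0

/-- `ι(b)`, the substitution of `b` into the formal inverse `ι`. -/
noncomputable def fneg (ι : MvPowerSeries (Fin 1) S) {n : ℕ}
    (b : MvPowerSeries (Fin n) S) : MvPowerSeries (Fin n) S :=
  msubst ![b] ι

/-- `a −_F b := F(a, ι(b))`. -/
noncomputable def fsub (F : MvPowerSeries (Fin 2) S) (ι : MvPowerSeries (Fin 1) S) {n : ℕ}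
    (a b : MvPowerSeries (Fin n) S) : MvPowerSeries (Fin n) S :=
  msubst ![a, fneg ι b] F

/-- Substitution `g(a,b)` of two power series into a two-variable power series `g`. -/
noncomputable def gsub (g : MvPowerSeries (Fin 2) S) {n : ℕ}
    (a b : MvPowerSeries (Fin n) S) : MvPowerSeries (Fin n) S :=
  msubst ![a, b] g

/-- The map on multivariate power series interchanging the variables `x_i` and `x_j`
(the renaming along the transposition `(i,j)`). -/
def swapVars {n : ℕ} (i j : Fin n) (f : MvPowerSeries (Fin n) S) :
    MvPowerSeries (Fin n) S :=
  fun m => f (equivMapDomain (Equiv.swap i j) m)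

lemma fin1_eq_single (m : Fin 1 →₀ ℕ) : m = single 0 (m 0) := by
  apply Finsupp.ext
  intro a
  rw [Subsingleton.elim a (0 : Fin 1)]
  simp

lemma coeff_X_pow_mul (g : MvPowerSeries (Fin 1) S) (i n : ℕ) :
    MvPowerSeries.coeff (single 0 n) ((X 0 : MvPowerSeries (Fin 1) S) ^ i * g)
      = if i ≤ n then MvPowerSeries.coeff (single 0 (n - i)) g else 0 := by
  rw [X_pow_eq, coeff_monomial_mul, one_mul]
  simp [Finsupp.single_le_iff, ← Finsupp.single_tsub]

lemma pow_coeff_low {ι ι' : MvPowerSeries (Fin 1) S} {n : ℕ}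
    (h : ∀ m : Fin 1 →₀ ℕ, m 0 < n → MvPowerSeries.coeff m ι = MvPowerSeries.coeff m ι')
    (j : ℕ) : ∀ m : Fin 1 →₀ ℕ, m 0 < n →
      MvPowerSeries.coeff m (ι ^ j) = MvPowerSeries.coeff m (ι' ^ j) := by
  induction j with
  | zero => intro m _; rfl
  | succ j ih =>
    intro m hm
    rw [pow_succ, pow_succ, coeff_mul, coeff_mul]
    refine Finset.sum_congr rfl fun p hp => ?_
    rw [Finset.HasAntidiagonal.mem_antidiagonal] at hp
    have h1 : p.1 0 ≤ m 0 := by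
      have := DFunLike.congr_fun hp (0 : Fin 1)
      simp only [Finsupp.add_apply] at this
      omega
    have h2 : p.2 0 ≤ m 0 := by
      have := DFunLike.congr_fun hp (0 : Fin 1)
      simp only [Finsupp.add_apply] at this
      omega
    rw [ih p.1 (lt_of_le_of_lt h1 hm), h p.2 (lt_of_le_of_lt h2 hm)]

lemma pow_coeff_top {ι ι' : MvPowerSeries (Fin 1) S} {n : ℕ}
    (h0 : MvPowerSeries.constantCoeff ι = 0)
    (h0' : MvPowerSeries.constantCoeff ι' = 0)
    (h : ∀ m : Fin 1 →₀ ℕ, m 0 < n → MvPowerSeries.coeff m ι = MvPowerSeries.coeff m ι')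
    {j : ℕ} (hj : j ≠ 1) :
      MvPowerSeries.coeff (single 0 n) (ι ^ j)
        = MvPowerSeries.coeff (single 0 n) (ι' ^ j) := by
  match j, hj with
  | 0, _ => rfl
  | (j+2), _ =>
    rw [pow_succ ι (j+1), pow_succ ι' (j+1), coeff_mul, coeff_mul]
    refine Finset.sum_congr rfl fun p hp => ?_
    rw [Finset.HasAntidiagonal.mem_antidiagonal] at hp
    have hsum : p.1 0 + p.2 0 = n := by
      have := DFunLike.congr_fun hp (0 : Fin 1)
      simpa using this
    by_cases hA : p.1 0 = 0
    · have hp1 : p.1 = 0 := by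
        rw [fin1_eq_single p.1, hA, Finsupp.single_zero]
      have z1 : MvPowerSeries.coeff p.1 (ι ^ (j+1)) = 0 := by
        rw [hp1, coeff_zero_eq_constantCoeff, map_pow, h0, zero_pow (by omega)]
      have z2 : MvPowerSeries.coeff p.1 (ι' ^ (j+1)) = 0 := by
        rw [hp1, coeff_zero_eq_constantCoeff, map_pow, h0', zero_pow (by omega)]
      rw [z1, z2, zero_mul, zero_mul]
    · by_cases hB : p.2 0 = 0
      · have hp2 : p.2 = 0 := by
          rw [fin1_eq_single p.2, hB, Finsupp.single_zero]
        have z1 : MvPowerSeries.coeff p.2 ι = 0 := by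
          rw [hp2, coeff_zero_eq_constantCoeff, h0]
        have z2 : MvPowerSeries.coeff p.2 ι' = 0 := by
          rw [hp2, coeff_zero_eq_constantCoeff, h0']
        rw [z1, z2, mul_zero, mul_zero]
      · rw [pow_coeff_low h (j+1) p.1 (by omega), h p.2 (by omega)]

lemma single_sum (n : ℕ) : (single (0:Fin 1) n).sum (fun _ e => e) = n := by
  simp [Finsupp.sum_single_index]

lemma coeff_msubst {n : ℕ} (F : MvPowerSeries (Fin 2) S) (a b : MvPowerSeries (Fin n) S)
    (m : Fin n →₀ ℕ) :
    MvPowerSeries.coeff m (msubst ![a, b] F)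
      = ∑ d ∈ Finset.Iic (equivFunOnFinite.symm fun _ : Fin 2 => m.sum fun _ e => e),
          MvPowerSeries.coeff d F
            * MvPowerSeries.coeff m (a ^ d 0 * b ^ d 1) := by
  show (msubst ![a, b] F) m = _
  rw [msubst]
  refine Finset.sum_congr rfl fun d _ => ?_
  rw [MvPowerSeries.coeff_apply]
  congr 1
  rw [Fin.prod_univ_two]
  simp

lemma fin2_sum (m : Fin 2 →₀ ℕ) : (m.sum fun _ e => e) = m 0 + m 1 := by
  rw [Finsupp.sum_fintype _ _ (fun _ => rfl), Fin.sum_univ_two]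

lemma fin2_eq (d : Fin 2 →₀ ℕ) : d = single 0 (d 0) + single 1 (d 1) := by
  apply Finsupp.ext
  intro a
  fin_cases a <;> simp [Finsupp.single_apply]

lemma mem_Iic_iff {k : ℕ} (d : Fin k →₀ ℕ) (n : ℕ) :
    d ∈ Finset.Iic (equivFunOnFinite.symm fun _ : Fin k => n) ↔ ∀ i, d i ≤ n := by
  rw [Finset.mem_Iic, Finsupp.le_def]
  simp

-- coefficient of x in F is 1
lemma coeff_single01 (F : MvPowerSeries (Fin 2) S)
    (hunit : msubst ![(X 0 : MvPowerSeries (Fin 2) S), 0] F = X 0) :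
    MvPowerSeries.coeff (single 0 1) F = 1 := by
  have h := congrArg (MvPowerSeries.coeff (single (0 : Fin 2) 1)) hunit
  rw [coeff_msubst, MvPowerSeries.coeff_X] at h
  rw [if_pos rfl] at h
  rw [Finset.sum_eq_single_of_mem (single 0 1)] at h
  · simpa using h
  · rw [mem_Iic_iff]
    intro i
    rw [fin2_sum]
    fin_cases i <;> simp [Finsupp.single_apply]
  · intro d _ hd
    by_cases h1 : d 1 = 0
    · have hd0 : d = single 0 (d 0) := by
        rw [fin2_eq d, h1]; simp
      rw [h1, pow_zero, mul_one, X_pow_eq, coeff_monomial]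
      rw [if_neg, mul_zero]
      intro hcon
      apply hd
      have h0 := DFunLike.congr_fun hcon (0 : Fin 2)
      simp [Finsupp.single_apply] at h0
      rw [hd0, ← h0]
    · rw [zero_pow h1, mul_zero, map_zero, mul_zero]

lemma coeff_single11 (F : MvPowerSeries (Fin 2) S)
    (hcomm : msubst ![(X 1 : MvPowerSeries (Fin 2) S), X 0] F = F)
    (hunit : msubst ![(X 0 : MvPowerSeries (Fin 2) S), 0] F = X 0) :
    MvPowerSeries.coeff (single 1 1) F = 1 := by
  have h := congrArg (MvPowerSeries.coeff (single (1 : Fin 2) 1)) hcomm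
  rw [coeff_msubst] at h
  rw [Finset.sum_eq_single_of_mem (single 0 1)] at h
  · rw [← h, ← coeff_single01 F hunit]
    simp
  · rw [mem_Iic_iff]
    intro i
    rw [fin2_sum]
    fin_cases i <;> simp [Finsupp.single_apply]
  · intro d _ hd
    rw [X_pow_eq, X_pow_eq, monomial_mul_monomial, one_mul, coeff_monomial, if_neg, mul_zero]
    intro hcon
    apply hd
    have h0 := DFunLike.congr_fun hcon (0 : Fin 2)
    have h1 := DFunLike.congr_fun hcon (1 : Fin 2)
    simp [Finsupp.single_apply] at h0 h1
    apply Finsupp.ext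
    intro a
    fin_cases a <;> simp [Finsupp.single_apply] <;> omega

lemma term_congr {n : ℕ} {ι ι' : MvPowerSeries (Fin 1) S}
    (h0 : MvPowerSeries.constantCoeff ι = 0)
    (h0' : MvPowerSeries.constantCoeff ι' = 0)
    (h : ∀ m : Fin 1 →₀ ℕ, m 0 < n → MvPowerSeries.coeff m ι = MvPowerSeries.coeff m ι')
    {d : Fin 2 →₀ ℕ} (hd : d ≠ single 1 1) :
    MvPowerSeries.coeff (single 0 n) ((X 0 : MvPowerSeries (Fin 1) S) ^ d 0 * ι ^ d 1)
      = MvPowerSeries.coeff (single 0 n) ((X 0 : MvPowerSeries (Fin 1) S) ^ d 0 * ι' ^ d 1) := by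
  rw [coeff_X_pow_mul, coeff_X_pow_mul]
  by_cases hle : d 0 ≤ n
  · rw [if_pos hle, if_pos hle]
    by_cases hz : d 0 = 0
    · have hd1 : d 1 ≠ 1 := by
        intro h1
        apply hd
        rw [fin2_eq d, hz, h1]
        simp
      rw [hz, Nat.sub_zero]
      exact pow_coeff_top h0 h0' h hd1
    · apply pow_coeff_low h
      simp only [Finsupp.single_eq_same]
      omega
  · rw [if_neg hle, if_neg hle]

noncomputable def invCoeff (F : MvPowerSeries (Fin 2) S) : ℕ → S
  | n =>
    if n = 0 then 0 else
      - ∑ d ∈ Finset.Iic (equivFunOnFinite.symm fun _ : Fin 2 => n),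
          if d = single 1 1 then 0 else
            MvPowerSeries.coeff d F *
              MvPowerSeries.coeff (single 0 n)
                ((X 0 : MvPowerSeries (Fin 1) S) ^ d 0 *
                  (show MvPowerSeries (Fin 1) S from
                    fun m => if hm : m 0 < n then invCoeff F (m 0) else 0) ^ d 1)
  decreasing_by exact hm

noncomputable def truncS (F : MvPowerSeries (Fin 2) S) (n : ℕ) : MvPowerSeries (Fin 1) S :=
  fun m => if m 0 < n then invCoeff F (m 0) else 0

noncomputable def iota (F : MvPowerSeries (Fin 2) S) : MvPowerSeries (Fin 1) S :=
  fun m => invCoeff F (m 0)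

lemma invCoeff_zero (F : MvPowerSeries (Fin 2) S) : invCoeff F 0 = 0 := by
  rw [invCoeff]
  simp

lemma invCoeff_eq (F : MvPowerSeries (Fin 2) S) {n : ℕ} (hn : n ≠ 0) :
    invCoeff F n
      = - ∑ d ∈ Finset.Iic (equivFunOnFinite.symm fun _ : Fin 2 => n),
          if d = single 1 1 then 0 else
            MvPowerSeries.coeff d F *
              MvPowerSeries.coeff (single 0 n)
                ((X 0 : MvPowerSeries (Fin 1) S) ^ d 0 * (truncS F n) ^ d 1) := by
  rw [invCoeff, if_neg hn]
  rfl

lemma coeff_iota (F : MvPowerSeries (Fin 2) S) (m : Fin 1 →₀ ℕ) :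
    MvPowerSeries.coeff m (iota F) = invCoeff F (m 0) := rfl

lemma constantCoeff_iota (F : MvPowerSeries (Fin 2) S) :
    MvPowerSeries.constantCoeff (iota F) = 0 := by
  rw [← coeff_zero_eq_constantCoeff, coeff_iota]
  simpa using invCoeff_zero F

lemma constantCoeff_truncS (F : MvPowerSeries (Fin 2) S) (n : ℕ) :
    MvPowerSeries.constantCoeff (truncS F n) = 0 := by
  rw [← coeff_zero_eq_constantCoeff]
  show (if (0 : Fin 1 →₀ ℕ) 0 < n then invCoeff F ((0 : Fin 1 →₀ ℕ) 0) else 0) = 0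
  split
  · simpa using invCoeff_zero F
  · rfl

lemma truncS_agree (F : MvPowerSeries (Fin 2) S) (n : ℕ) :
    ∀ m : Fin 1 →₀ ℕ, m 0 < n →
      MvPowerSeries.coeff m (truncS F n) = MvPowerSeries.coeff m (iota F) := by
  intro m hm
  show (if m 0 < n then invCoeff F (m 0) else 0) = invCoeff F (m 0)
  rw [if_pos hm]

lemma single11_mem {n : ℕ} (hn : n ≠ 0) :
    (single 1 1 : Fin 2 →₀ ℕ) ∈ Finset.Iic (equivFunOnFinite.symm fun _ : Fin 2 => n) := by
  rw [mem_Iic_iff]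
  intro i
  simp [Finsupp.single_apply]
  split <;> omega

lemma expand (F : MvPowerSeries (Fin 2) S)
    (hc : MvPowerSeries.coeff (single 1 1) F = 1)
    (ι : MvPowerSeries (Fin 1) S) {n : ℕ} (hn : n ≠ 0) :
    MvPowerSeries.coeff (single 0 n) (msubst ![(X 0 : MvPowerSeries (Fin 1) S), ι] F)
      = MvPowerSeries.coeff (single 0 n) ι +
        ∑ d ∈ (Finset.Iic (equivFunOnFinite.symm fun _ : Fin 2 => n)).erase (single 1 1),
          MvPowerSeries.coeff d F *
            MvPowerSeries.coeff (single 0 n)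
              ((X 0 : MvPowerSeries (Fin 1) S) ^ d 0 * ι ^ d 1) := by
  rw [coeff_msubst, single_sum, ← Finset.add_sum_erase _ _ (single11_mem hn)]
  congr 1
  have h0 : (single 1 1 : Fin 2 →₀ ℕ) 0 = 0 := by
    simp [Finsupp.single_apply]
  have h1 : (single 1 1 : Fin 2 →₀ ℕ) 1 = 1 := by
    simp
  rw [h0, h1, hc, pow_zero, one_mul, pow_one, one_mul]

/-- every formal group law over a commutative ring `S` has a unique formal
inverse: a power series `ι ∈ S[[x]]` with zero constant coefficient and `F(x, ι(x)) = 0`. -/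
theorem formalGroupLaw_exists_unique_formal_inverse
    (F : MvPowerSeries (Fin 2) S) (hF : IsFormalGroupLaw F) :
    ∃! ι : MvPowerSeries (Fin 1) S, IsFormalInverse F ι := by
  obtain ⟨hF0, hcomm, hunit, -⟩ := hF
  have hc : MvPowerSeries.coeff (single 1 1) F = 1 := coeff_single11 F hcomm hunit
  -- the main computation: coefficients of F(x, iota F x)
  have key : ∀ n : ℕ,
      MvPowerSeries.coeff (single 0 n)
        (msubst ![(X 0 : MvPowerSeries (Fin 1) S), iota F] F) = 0 := by
    intro n
    by_cases hn : n = 0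
    · subst hn
      rw [coeff_msubst, single_sum]
      rw [Finset.sum_eq_single_of_mem (0 : Fin 2 →₀ ℕ)]
      · have hz : (single (0 : Fin 1) 0 : Fin 1 →₀ ℕ) = 0 := Finsupp.single_zero 0
        simp only [Finsupp.coe_zero, Pi.zero_apply, pow_zero, one_mul, hz,
          coeff_zero_eq_constantCoeff, map_one, mul_one]
        exact hF0
      · rw [mem_Iic_iff]; intro i; exact Nat.zero_le 0
      · intro d hd hdne
        exfalso
        apply hdne
        rw [mem_Iic_iff] at hd
        apply Finsupp.ext
        intro a
        have := hd a
        simpa using this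
    · rw [expand F hc _ hn]
      have hrw : ∑ d ∈ (Finset.Iic (equivFunOnFinite.symm fun _ : Fin 2 => n)).erase
              (single 1 1),
            MvPowerSeries.coeff d F *
              MvPowerSeries.coeff (single 0 n)
                ((X 0 : MvPowerSeries (Fin 1) S) ^ d 0 * (iota F) ^ d 1)
          = ∑ d ∈ (Finset.Iic (equivFunOnFinite.symm fun _ : Fin 2 => n)).erase
              (single 1 1),
            MvPowerSeries.coeff d F *
              MvPowerSeries.coeff (single 0 n)
                ((X 0 : MvPowerSeries (Fin 1) S) ^ d 0 * (truncS F n) ^ d 1) := by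
        refine Finset.sum_congr rfl fun d hd => ?_
        rw [term_congr (constantCoeff_iota F) (constantCoeff_truncS F n)
          (fun m hm => (truncS_agree F n m hm).symm) (Finset.ne_of_mem_erase hd)]
      rw [hrw, coeff_iota]
      have hsn : (single (0 : Fin 1) n) 0 = n := Finsupp.single_eq_same
      rw [hsn, invCoeff_eq F hn]
      have hite : ∑ d ∈ Finset.Iic (equivFunOnFinite.symm fun _ : Fin 2 => n),
            (if d = single 1 1 then 0 else
              MvPowerSeries.coeff d F *
                MvPowerSeries.coeff (single 0 n)
                  ((X 0 : MvPowerSeries (Fin 1) S) ^ d 0 * (truncS F n) ^ d 1))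
          = ∑ d ∈ (Finset.Iic (equivFunOnFinite.symm fun _ : Fin 2 => n)).erase
              (single 1 1),
            MvPowerSeries.coeff d F *
              MvPowerSeries.coeff (single 0 n)
                ((X 0 : MvPowerSeries (Fin 1) S) ^ d 0 * (truncS F n) ^ d 1) := by
        rw [← Finset.add_sum_erase _ _ (single11_mem hn), if_pos rfl, zero_add]
        exact Finset.sum_congr rfl fun d hd => if_neg (Finset.ne_of_mem_erase hd)
      rw [hite]
      ring
  have hex : IsFormalInverse F (iota F) := by
    refine ⟨constantCoeff_iota F, ?_⟩
    apply MvPowerSeries.ext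
    intro m
    rw [fin1_eq_single m, key, map_zero]
  refine ⟨iota F, hex, ?_⟩
  rintro ι' ⟨h0', hsub'⟩
  have keyu : ∀ n : ℕ, MvPowerSeries.coeff (single 0 n) ι'
      = MvPowerSeries.coeff (single 0 n) (iota F) := by
    intro n
    induction n using Nat.strong_induction_on with
    | _ n ih =>
    by_cases hn : n = 0
    · subst hn
      rw [Finsupp.single_zero, coeff_zero_eq_constantCoeff, h0', constantCoeff_iota]
    · have hagree : ∀ m : Fin 1 →₀ ℕ, m 0 < n →
          MvPowerSeries.coeff m ι' = MvPowerSeries.coeff m (iota F) := by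
        intro m hm
        rw [fin1_eq_single m]
        exact ih (m 0) hm
      have h1 : MvPowerSeries.coeff (single 0 n)
          (msubst ![(X 0 : MvPowerSeries (Fin 1) S), ι'] F) = 0 := by
        rw [hsub', map_zero]
      have h2 := key n
      rw [expand F hc _ hn] at h1 h2
      have hsame : ∑ d ∈ (Finset.Iic (equivFunOnFinite.symm fun _ : Fin 2 => n)).erase
              (single 1 1),
            MvPowerSeries.coeff d F *
              MvPowerSeries.coeff (single 0 n)
                ((X 0 : MvPowerSeries (Fin 1) S) ^ d 0 * ι' ^ d 1)
          = ∑ d ∈ (Finset.Iic (equivFunOnFinite.symm fun _ : Fin 2 => n)).erase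
              (single 1 1),
            MvPowerSeries.coeff d F *
              MvPowerSeries.coeff (single 0 n)
                ((X 0 : MvPowerSeries (Fin 1) S) ^ d 0 * (iota F) ^ d 1) := by
        refine Finset.sum_congr rfl fun d hd => ?_
        rw [term_congr h0' (constantCoeff_iota F) hagree (Finset.ne_of_mem_erase hd)]
      rw [hsame] at h1
      have := h1.trans h2.symm
      exact add_right_cancel this
  apply MvPowerSeries.ext
  intro m
  rw [fin1_eq_single m]
  exact keyu (m 0)

end
end

section
/- Let S be a commutative ring, F a formal group law over S, n ≥ 2, and 1 ≤ i ≤ n−1. Then for every f ∈ R = S[[x_1,…,x_n]], the element f − s_i(f) is divisible in R both by x_i −_F x_{i+1} and by x_{i+1} −_F x_i. -/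
/- Common setup: substitution of multivariate power series, formal group laws,
formal inverses, and the variable–swapping operation. -/

open MvPowerSeries Finsupp

noncomputable section

variable {S : Type*} [CommRing S]

namespace FGLAux

variable {n : ℕ}

/-- the total degree of an exponent -/
lemma apply_le_total (m : Fin n →₀ ℕ) (k : Fin n) : m k ≤ m.sum fun _ e => e := by
  by_cases h : m k = 0
  · simp [h]
  · exact Finset.single_le_sum (fun _ _ => Nat.zero_le _) (Finsupp.mem_support_iff.mpr h)

lemma total_single (j : Fin n) (e : ℕ) : (single j e).sum (fun _ e => e) = e :=
  Finsupp.sum_single_index rfl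

lemma total_add (u v : Fin n →₀ ℕ) :
    (u + v).sum (fun _ e => e) = u.sum (fun _ e => e) + v.sum (fun _ e => e) :=
  Finsupp.sum_add_index' (fun _ => rfl) (fun _ _ _ => rfl)

lemma mem_Iic_iff {k : ℕ} (d : Fin k →₀ ℕ) (c : ℕ) :
    d ∈ Finset.Iic (equivFunOnFinite.symm fun _ : Fin k => c) ↔ ∀ t, d t ≤ c := by
  rw [Finset.mem_Iic, Finsupp.le_def]; simp

/-- the one-variable power series `g`, viewed in the variable `x_j` of `n` variables -/
noncomputable def emb (j : Fin n) (g : MvPowerSeries (Fin 1) S) : MvPowerSeries (Fin n) S :=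
  fun m => if m = single j (m j) then coeff (single 0 (m j)) g else 0

lemma coeff_emb (j : Fin n) (g : MvPowerSeries (Fin 1) S) (m : Fin n →₀ ℕ) :
    coeff m (emb j g) = if m = single j (m j) then coeff (single 0 (m j)) g else 0 := rfl

lemma coeff_emb_single (j : Fin n) (g : MvPowerSeries (Fin 1) S) (e : ℕ) :
    coeff (single j e) (emb j g) = coeff (single 0 e) g := by
  rw [coeff_emb, single_eq_same, if_pos rfl]

lemma emb_mul (j : Fin n) (g h : MvPowerSeries (Fin 1) S) :
    emb j (g * h) = emb j g * emb j h := by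
  ext m
  rw [coeff_mul, coeff_emb]
  by_cases hm : m = single j (m j)
  · rw [if_pos hm, coeff_mul]
    conv_rhs => rw [hm]
    rw [Finsupp.antidiagonal_single, Finsupp.antidiagonal_single, Finset.sum_map,
      Finset.sum_map]
    refine Finset.sum_congr rfl fun p _ => ?_
    simp only [Function.Embedding.coe_prodMap, Function.Embedding.coeFn_mk, Prod.map_fst,
      Prod.map_snd]
    rw [coeff_emb_single, coeff_emb_single]
  · rw [if_neg hm]
    symm
    refine Finset.sum_eq_zero fun p hp => ?_
    rw [Finset.HasAntidiagonal.mem_antidiagonal] at hp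
    rw [coeff_emb, coeff_emb]
    by_cases h1 : p.1 = single j (p.1 j)
    · by_cases h2 : p.2 = single j (p.2 j)
      · exfalso
        apply hm
        rw [← hp]
        conv_lhs => rw [h1, h2]
        rw [← Finsupp.single_add]
        congr 1
      · rw [if_neg h2, mul_zero]
    · rw [if_neg h1, zero_mul]

lemma emb_one (j : Fin n) : emb j (1 : MvPowerSeries (Fin 1) S) = 1 := by
  ext m
  rw [coeff_emb, coeff_one, coeff_one]
  by_cases hm0 : m = 0
  · subst hm0
    simp
  · rw [if_neg hm0]
    by_cases hm : m = single j (m j)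
    · rw [if_pos hm, if_neg, ]
      intro h
      apply hm0
      rw [Finsupp.single_eq_zero] at h
      rw [hm, h, Finsupp.single_zero]
    · rw [if_neg hm]

lemma emb_pow (j : Fin n) (g : MvPowerSeries (Fin 1) S) (q : ℕ) :
    emb j (g ^ q) = (emb j g) ^ q := by
  induction q with
  | zero => rw [pow_zero, pow_zero, emb_one]
  | succ q ih => rw [pow_succ, pow_succ, emb_mul, ih]

lemma coeff_msubst1 (a : MvPowerSeries (Fin n) S) (g : MvPowerSeries (Fin 1) S)
    (m : Fin n →₀ ℕ) :
    coeff m (msubst ![a] g) =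
      ∑ d ∈ Finset.Iic (equivFunOnFinite.symm fun _ : Fin 1 => m.sum fun _ e => e),
        coeff d g * coeff m (a ^ d 0) := by
  show (∑ d ∈ Finset.Iic (equivFunOnFinite.symm fun _ : Fin 1 => m.sum fun _ e => e),
        coeff d g * coeff m (∏ t, (![a]) t ^ d t)) = _
  refine Finset.sum_congr rfl fun d _ => ?_
  rw [Fin.prod_univ_one]
  rfl

lemma coeff_msubst2 (a b : MvPowerSeries (Fin n) S) (g : MvPowerSeries (Fin 2) S)
    (m : Fin n →₀ ℕ) :
    coeff m (msubst ![a, b] g) =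
      ∑ d ∈ Finset.Iic (equivFunOnFinite.symm fun _ : Fin 2 => m.sum fun _ e => e),
        coeff d g * coeff m (a ^ d 0 * b ^ d 1) := by
  show (∑ d ∈ Finset.Iic (equivFunOnFinite.symm fun _ : Fin 2 => m.sum fun _ e => e),
        coeff d g * coeff m (∏ t, (![a, b]) t ^ d t)) = _
  refine Finset.sum_congr rfl fun d _ => ?_
  rw [Fin.prod_univ_two]
  rfl

lemma msubst_X_emb (ι : MvPowerSeries (Fin 1) S) (j : Fin n) :
    msubst ![(X j : MvPowerSeries (Fin n) S)] ι = emb j ι := by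
  ext m
  rw [coeff_msubst1, coeff_emb]
  rw [Finset.sum_eq_single_of_mem (single (0 : Fin 1) (m j))]
  · rw [single_eq_same, X_pow_eq, coeff_monomial]
    by_cases hm : m = single j (m j)
    · rw [if_pos hm, if_pos hm, mul_one]
    · rw [if_neg hm, if_neg hm, mul_zero]
  · rw [mem_Iic_iff]
    intro t
    rw [Subsingleton.elim t 0, single_eq_same]
    exact apply_le_total m j
  · intro d _ hd
    rw [X_pow_eq, coeff_monomial, if_neg, mul_zero]
    intro h
    apply hd
    have : d 0 = m j := by rw [h, single_eq_same]
    rw [show d = single 0 (d 0) from by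
      apply Finsupp.ext; intro t; rw [Subsingleton.elim t 0]; simp, this]

lemma exists_factor {i j : Fin n} (hij : i ≠ j) (h : MvPowerSeries (Fin n) S)
    (H : ∀ m : Fin n →₀ ℕ, m i = 0 →
      ∑ s ∈ Finset.range (m j + 1), coeff ((m - single j s) + single i s) h = 0) :
    ∃ q : MvPowerSeries (Fin n) S, h = ((X i : MvPowerSeries (Fin n) S) - X j) * q ∧
      constantCoeff q = coeff (single i 1) h := by
  classical
  let q : MvPowerSeries (Fin n) S :=
    fun u => ∑ t ∈ Finset.range (u j + 1), coeff ((u - single j t) + single i (t + 1)) h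
  have hqq : ∀ u : Fin n →₀ ℕ, coeff u q
      = ∑ t ∈ Finset.range (u j + 1), coeff ((u - single j t) + single i (t + 1)) h :=
    fun u => rfl
  refine ⟨q, ?_, ?_⟩
  swap
  · rw [← coeff_zero_eq_constantCoeff_apply, hqq]
    simp
  · ext m
    have hXi : (X i : MvPowerSeries (Fin n) S) = monomial (single i 1) 1 := rfl
    have hXj : (X j : MvPowerSeries (Fin n) S) = monomial (single j 1) 1 := rfl
    rw [sub_mul, map_sub, hXi, hXj, coeff_monomial_mul, coeff_monomial_mul, one_mul, one_mul]
    simp only [Finsupp.single_le_iff]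
    have e0 : coeff ((m - single j 0) + single i 0) h = coeff m h := by
      rw [Finsupp.single_zero, Finsupp.single_zero, tsub_zero, add_zero]
    have e2 : 1 ≤ m j → coeff (m - single j 1) q
        = ∑ t ∈ Finset.range (m j), coeff ((m - single j (t + 1)) + single i (t + 1)) h := by
      intro hB
      rw [hqq]
      have hmj1 : (m - single j 1 : Fin n →₀ ℕ) j = m j - 1 := by
        rw [Finsupp.tsub_apply, single_eq_same]
      rw [hmj1, Nat.sub_add_cancel hB]
      refine Finset.sum_congr rfl fun t _ => ?_
      have hind : (m - single j 1 - single j t) + single i (t + 1)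
          = (m - single j (t + 1)) + single i (t + 1) := by
        rw [tsub_tsub, ← Finsupp.single_add, Nat.add_comm 1 t]
      rw [hind]
    by_cases hA : 1 ≤ m i
    · rw [if_pos hA]
      have hmij : (m - single i 1 : Fin n →₀ ℕ) j = m j := by
        rw [Finsupp.tsub_apply, Finsupp.single_apply, if_neg hij, Nat.sub_zero]
      have e1 : coeff (m - single i 1) q
          = ∑ t ∈ Finset.range (m j + 1), coeff ((m - single j t) + single i t) h := by
        rw [hqq, hmij]
        refine Finset.sum_congr rfl fun t _ => ?_
        have hind : (m - single i 1 - single j t) + single i (t + 1)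
            = (m - single j t) + single i t := by
          apply Finsupp.ext; intro k
          rcases eq_or_ne i k with rfl | hik <;>
            simp only [Finsupp.add_apply, Finsupp.tsub_apply, Finsupp.single_apply] <;>
            split_ifs <;> omega
        rw [hind]
      by_cases hB : 1 ≤ m j
      · rw [if_pos hB, e1, e2 hB, Finset.sum_range_succ' _ (m j), e0]
        ring
      · rw [if_neg hB]
        have hB0 : m j = 0 := by omega
        rw [e1, hB0, Finset.sum_range_one, e0, sub_zero]
    · rw [if_neg hA]
      have hA0 : m i = 0 := by omega
      have H0 := H m hA0
      rw [Finset.sum_range_succ' _ (m j), e0] at H0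
      by_cases hB : 1 ≤ m j
      · rw [if_pos hB, e2 hB]
        linear_combination H0
      · rw [if_neg hB]
        have hB0 : m j = 0 := by omega
        rw [hB0] at H0
        simp only [Finset.range_zero, Finset.sum_empty, zero_add] at H0
        rw [H0, zero_sub, neg_zero]

lemma collapse_sub_swap {i j : Fin n} (hij : i ≠ j) (f : MvPowerSeries (Fin n) S) :
    ∀ m : Fin n →₀ ℕ, m i = 0 →
      ∑ s ∈ Finset.range (m j + 1),
        coeff ((m - single j s) + single i s) (f - swapVars i j f) = 0 := by
  intro m hmi
  have hsw : ∀ u : Fin n →₀ ℕ, coeff u (swapVars i j f)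
      = coeff (equivMapDomain (Equiv.swap i j) u) f := fun u => rfl
  simp only [map_sub]
  rw [Finset.sum_sub_distrib]
  have key : ∀ s ∈ Finset.range (m j + 1),
      coeff ((m - single j s) + single i s) (swapVars i j f)
      = coeff ((m - single j (m j - s)) + single i (m j - s)) f := by
    intro s hs
    rw [Finset.mem_range] at hs
    rw [hsw]
    have hind : equivMapDomain (Equiv.swap i j) ((m - single j s) + single i s)
        = (m - single j (m j - s)) + single i (m j - s) := by
      apply Finsupp.ext; intro k
      have hsymm : (Equiv.swap i j).symm = Equiv.swap i j := Equiv.symm_swap i j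
      have happ : (equivMapDomain (Equiv.swap i j) ((m - single j s) + single i s)) k
          = ((m - single j s) + single i s) ((Equiv.swap i j) k) := by
        rw [show (equivMapDomain (Equiv.swap i j) ((m - single j s) + single i s)) k
          = ((m - single j s) + single i s) ((Equiv.swap i j).symm k) from rfl, hsymm]
      rw [happ]
      rcases eq_or_ne k i with rfl | hki
      · rw [Equiv.swap_apply_left]
        simp only [Finsupp.add_apply, Finsupp.tsub_apply, Finsupp.single_apply]
        split_ifs <;> omega
      · rcases eq_or_ne k j with rfl | hkj
        · rw [Equiv.swap_apply_right]
          simp only [Finsupp.add_apply, Finsupp.tsub_apply, Finsupp.single_apply]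
          split_ifs <;> omega
        · rw [Equiv.swap_apply_of_ne_of_ne hki hkj]
          simp only [Finsupp.add_apply, Finsupp.tsub_apply, Finsupp.single_apply]
          split_ifs <;> omega
    rw [hind]
  rw [Finset.sum_congr rfl key]
  have hrefl := Finset.sum_range_reflect
    (fun s => coeff ((m - single j s) + single i s) f) (m j + 1)
  simp only [Nat.add_sub_cancel] at hrefl
  rw [hrefl, sub_self]

lemma coeff_Xpow_mul_embpow {i j : Fin n} (hij : i ≠ j) (g : MvPowerSeries (Fin 1) S)
    (p q : ℕ) (m : Fin n →₀ ℕ) :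
    coeff m ((X i : MvPowerSeries (Fin n) S) ^ p * (emb j g) ^ q)
      = if m i = p ∧ m = single i (m i) + single j (m j) then
          coeff (single 0 (m j)) (g ^ q) else 0 := by
  rw [← emb_pow, X_pow_eq, coeff_monomial_mul]
  by_cases hle : single i p ≤ m
  · rw [if_pos hle, one_mul, coeff_emb]
    have hj : (m - single i p : Fin n →₀ ℕ) j = m j := by
      rw [Finsupp.tsub_apply, Finsupp.single_apply, if_neg hij, Nat.sub_zero]
    rw [hj]
    by_cases hc : m - single i p = single j (m j)
    · rw [if_pos hc]
      have hm : m = single j (m j) + single i p :=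
        ((tsub_eq_iff_eq_add_of_le hle).mp hc)
      have h1 : m i = p := by
        conv_lhs => rw [hm]
        rw [Finsupp.add_apply, Finsupp.single_apply, if_neg (fun hh : j = i => hij hh.symm),
          single_eq_same, Nat.zero_add]
      rw [if_pos ⟨h1, by rw [h1]; rw [add_comm] at hm; exact hm⟩]
    · rw [if_neg hc, if_neg]
      rintro ⟨h1, h2⟩
      apply hc
      conv_lhs => rw [h2, h1]
      rw [add_comm (single i p) (single j (m j)), add_tsub_cancel_right]
  · rw [if_neg hle, if_neg]
    rintro ⟨h1, _⟩
    exact hle (by rw [← h1]; exact Finsupp.single_le_iff.mpr le_rfl)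

lemma collapse_D {i j : Fin n} (hij : i ≠ j) (F : MvPowerSeries (Fin 2) S)
    (ι : MvPowerSeries (Fin 1) S) (hι2 : msubst ![(X 0 : MvPowerSeries (Fin 1) S), ι] F = 0) :
    ∀ m : Fin n →₀ ℕ, m i = 0 →
      ∑ s ∈ Finset.range (m j + 1),
        coeff ((m - single j s) + single i s) (msubst ![X i, emb j ι] F) = 0 := by
  intro m hmi
  by_cases hm : m = single j (m j)
  · -- main case : m is supported at j
    set b := m j with hb
    -- each term of the sum
    have step1 : ∀ s ∈ Finset.range (b + 1),
        coeff ((m - single j s) + single i s) (msubst ![X i, emb j ι] F)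
          = ∑ d ∈ Finset.Iic (equivFunOnFinite.symm fun _ : Fin 2 => b),
              coeff d F *
                (if s = d 0 then coeff (single 0 (b - s)) (ι ^ d 1) else 0) := by
      intro s hs
      rw [Finset.mem_range] at hs
      have hms : (m - single j s) + single i s = single j (b - s) + single i s := by
        conv_lhs => rw [hm]
        rw [← Finsupp.single_tsub]
      have htot : ((m - single j s) + single i s).sum (fun _ e => e) = b := by
        rw [hms, total_add, total_single, total_single]
        omega
      rw [coeff_msubst2, htot]
      refine Finset.sum_congr rfl fun d _ => ?_
      congr 1
      rw [coeff_Xpow_mul_embpow hij]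
      have hmsi : ((m - single j s) + single i s) i = s := by
        rw [hms, Finsupp.add_apply, Finsupp.single_apply, if_neg (fun hh : j = i => hij hh.symm),
          single_eq_same, Nat.zero_add]
      have hmsj : ((m - single j s) + single i s) j = b - s := by
        rw [hms, Finsupp.add_apply, single_eq_same, Finsupp.single_apply, if_neg hij,
          Nat.add_zero]
      rw [hmsi, hmsj]
      have hsupp : (m - single j s) + single i s
          = single i s + single j (b - s) := by
        rw [hms, add_comm]
      exact if_congr (and_iff_left hsupp) rfl rfl
    rw [Finset.sum_congr rfl step1, Finset.sum_comm]
    have step2 : ∀ d ∈ Finset.Iic (equivFunOnFinite.symm fun _ : Fin 2 => b),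
        (∑ s ∈ Finset.range (b + 1),
            coeff d F * (if s = d 0 then coeff (single 0 (b - s)) (ι ^ d 1) else 0))
          = coeff d F * coeff (single 0 (b - d 0)) (ι ^ d 1) := by
      intro d hd
      rw [← Finset.mul_sum]
      congr 1
      rw [Finset.sum_ite_eq' (Finset.range (b + 1)) (d 0)
        (fun s => coeff (single 0 (b - s)) (ι ^ d 1)), if_pos]
      rw [Finset.mem_range]
      have := (mem_Iic_iff d b).mp hd 0
      omega
    rw [Finset.sum_congr rfl step2]
    have h0 := congrArg (coeff (single (0 : Fin 1) b)) hι2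
    rw [map_zero, coeff_msubst2, total_single] at h0
    rw [← h0]
    refine Finset.sum_congr rfl fun d hd => ?_
    congr 1
    have hd0 : d 0 ≤ b := (mem_Iic_iff d b).mp hd 0
    rw [X_pow_eq, coeff_monomial_mul, if_pos, one_mul]
    · rw [← Finsupp.single_tsub]
    · exact Finsupp.single_le_iff.mpr (by rw [single_eq_same]; exact hd0)
  · -- degenerate case : some other variable occurs in m, every coefficient vanishes
    refine Finset.sum_eq_zero fun s hs => ?_
    rw [coeff_msubst2]
    refine Finset.sum_eq_zero fun d _ => ?_
    rw [coeff_Xpow_mul_embpow hij, if_neg, mul_zero]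
    rintro ⟨-, h2⟩
    apply hm
    apply Finsupp.ext; intro k
    rcases eq_or_ne k i with rfl | hki
    · simp only [Finsupp.single_apply]
      split_ifs <;> omega
    · rcases eq_or_ne k j with rfl | hkj
      · simp only [Finsupp.single_apply]
        split_ifs <;> omega
      · have h2k := DFunLike.congr_fun h2 k
        simp only [Finsupp.add_apply, Finsupp.tsub_apply, Finsupp.single_apply] at h2k ⊢
        split_ifs at h2k ⊢ <;> omega

lemma fin2_eq_single {d : Fin 2 →₀ ℕ} (h0 : d 0 = 1) (h1 : d 1 = 0) :
    d = single 0 1 := by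
  apply Finsupp.ext; intro t; fin_cases t <;> simp [h0, h1, Finsupp.single_apply]

lemma single01_val0 : (single (0 : Fin 2) 1) 0 = 1 := single_eq_same

lemma single01_val1 : (single (0 : Fin 2) 1) 1 = 0 := by
  rw [Finsupp.single_apply, if_neg]
  decide

lemma single01_mem :
    (single (0 : Fin 2) 1) ∈ Finset.Iic (equivFunOnFinite.symm fun _ : Fin 2 => 1) :=
  (mem_Iic_iff _ 1).mpr fun t => by
    rw [Finsupp.single_apply]
    split <;> omega

lemma coeff_F_single (F : MvPowerSeries (Fin 2) S)
    (hFu : msubst ![(X 0 : MvPowerSeries (Fin 2) S), 0] F = X 0) :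
    coeff (single (0 : Fin 2) 1) F = 1 := by
  have h0 := congrArg (coeff (single (0 : Fin 2) 1)) hFu
  rw [coeff_msubst2, total_single] at h0
  have hXval : coeff (single (0 : Fin 2) 1) (X 0 : MvPowerSeries (Fin 2) S) = 1 := by
    rw [X, coeff_monomial_same]
  rw [hXval] at h0
  have hsum : (∑ d ∈ Finset.Iic (equivFunOnFinite.symm fun _ : Fin 2 => 1),
      coeff d F * coeff (single (0 : Fin 2) 1)
        ((X 0 : MvPowerSeries (Fin 2) S) ^ d 0 * (0 : MvPowerSeries (Fin 2) S) ^ d 1))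
      = coeff (single (0 : Fin 2) 1) F := by
    rw [Finset.sum_eq_single_of_mem (single (0 : Fin 2) 1) single01_mem]
    · rw [single01_val0, single01_val1, pow_zero, mul_one, pow_one, hXval, mul_one]
    · intro d _ hne
      by_cases hd1 : d 1 = 0
      · have hd0 : d 0 ≠ 1 := fun hh => hne (fin2_eq_single hh hd1)
        rw [hd1, pow_zero, mul_one, X_pow_eq, coeff_monomial, if_neg, mul_zero]
        intro hh
        apply hd0
        have h00 := DFunLike.congr_fun hh 0
        rw [single01_val0, single_eq_same] at h00
        omega
      · rw [zero_pow hd1, mul_zero, map_zero, mul_zero]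
  rw [hsum] at h0
  exact h0

lemma coeff_D_single {i j : Fin n} (hij : i ≠ j) (F : MvPowerSeries (Fin 2) S)
    (ι : MvPowerSeries (Fin 1) S) (hι1 : constantCoeff ι = 0) :
    coeff (single i 1) (msubst ![(X i : MvPowerSeries (Fin n) S), emb j ι] F)
      = coeff (single (0 : Fin 2) 1) F := by
  rw [coeff_msubst2, total_single]
  have hii : (single i 1 : Fin n →₀ ℕ) i = 1 := single_eq_same
  have hij0 : (single i 1 : Fin n →₀ ℕ) j = 0 := by
    rw [Finsupp.single_apply, if_neg hij]
  have heval : ∀ d : Fin 2 →₀ ℕ,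
      coeff (single i 1) ((X i : MvPowerSeries (Fin n) S) ^ d 0 * (emb j ι) ^ d 1)
        = if d 0 = 1 ∧ d 1 = 0 then 1 else 0 := by
    intro d
    rw [coeff_Xpow_mul_embpow hij, hii, hij0]
    have hc2 : (single i 1 : Fin n →₀ ℕ) = single i 1 + single j (0 : ℕ) := by
      rw [Finsupp.single_zero, add_zero]
    rcases eq_or_ne (d 0) 1 with h0 | h0
    · rcases eq_or_ne (d 1) 0 with h1 | h1
      · rw [if_pos ⟨h0.symm, hc2⟩, if_pos ⟨h0, h1⟩, h1, pow_zero, Finsupp.single_zero,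
          coeff_zero_eq_constantCoeff, map_one]
      · rw [if_pos ⟨h0.symm, hc2⟩, if_neg (fun hh => h1 hh.2), Finsupp.single_zero,
          coeff_zero_eq_constantCoeff, map_pow, hι1, zero_pow h1]
    · rw [if_neg (fun hh => h0 hh.1.symm), if_neg (fun hh => h0 hh.1)]
  rw [Finset.sum_congr rfl (fun d _ => by rw [heval d])]
  rw [Finset.sum_eq_single_of_mem (single (0 : Fin 2) 1) single01_mem]
  · rw [single01_val0, single01_val1, if_pos ⟨rfl, rfl⟩, mul_one]
  · intro d _ hne
    rw [if_neg, mul_zero]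
    rintro ⟨h0, h1⟩
    exact hne (fin2_eq_single h0 h1)

lemma D_eq (F : MvPowerSeries (Fin 2) S) (ι : MvPowerSeries (Fin 1) S) {i j : Fin n} :
    fsub F ι (X i : MvPowerSeries (Fin n) S) (X j) = msubst ![X i, emb j ι] F := by
  show msubst ![X i, fneg ι (X j)] F = _
  rw [show fneg ι (X j : MvPowerSeries (Fin n) S) = emb j ι from msubst_X_emb ι j]

lemma fsub_X_dvd {i j : Fin n} (hij : i ≠ j) (F : MvPowerSeries (Fin 2) S)
    (hF : IsFormalGroupLaw F) (ι : MvPowerSeries (Fin 1) S) (hι : IsFormalInverse F ι) :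
    fsub F ι (X i : MvPowerSeries (Fin n) S) (X j) ∣
      ((X i : MvPowerSeries (Fin n) S) - X j) := by
  obtain ⟨q, hfac, hq⟩ :=
    exists_factor hij (msubst ![X i, emb j ι] F) (collapse_D hij F ι hι.2)
  have hq1 : constantCoeff q = 1 := by
    rw [hq, coeff_D_single hij F ι hι.1, coeff_F_single F hF.2.2.1]
  obtain ⟨u, hu⟩ := isUnit_iff_constantCoeff.mpr (by rw [hq1]; exact isUnit_one)
  refine ⟨(u⁻¹ : (MvPowerSeries (Fin n) S)ˣ), ?_⟩
  rw [D_eq, hfac, ← hu, mul_assoc, Units.mul_inv, mul_one]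

lemma X_sub_X_dvd {i j : Fin n} (hij : i ≠ j) (f : MvPowerSeries (Fin n) S) :
    ((X i : MvPowerSeries (Fin n) S) - X j) ∣ (f - swapVars i j f) := by
  obtain ⟨q, hfac, -⟩ := exists_factor hij _ (collapse_sub_swap hij f)
  exact ⟨q, hfac⟩

end FGLAux

/-- for every `f ∈ R = S[[x_1,…,x_n]]`, the element `f − s_i(f)` is divisible
both by `x_i −_F x_{i+1}` and by `x_{i+1} −_F x_i`. -/
theorem fsub_dvd_sub_swapVars
    (F : MvPowerSeries (Fin 2) S) (hF : IsFormalGroupLaw F)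
    (ι : MvPowerSeries (Fin 1) S) (hι : IsFormalInverse F ι)
    {n : ℕ} (i j : Fin n) (hij : (i : ℕ) + 1 = (j : ℕ))
    (f : MvPowerSeries (Fin n) S) :
    fsub F ι (X i : MvPowerSeries (Fin n) S) (X j) ∣ (f - swapVars i j f) ∧
    fsub F ι (X j : MvPowerSeries (Fin n) S) (X i) ∣ (f - swapVars i j f) := by
  have hij' : i ≠ j := by
    intro h
    rw [h] at hij
    omega
  constructor
  · exact dvd_trans (FGLAux.fsub_X_dvd hij' F hF ι hι) (FGLAux.X_sub_X_dvd hij' f)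
  · have h1 := FGLAux.fsub_X_dvd (Ne.symm hij') F hF ι hι
    have h2 : ((X j : MvPowerSeries (Fin n) S) - X i) ∣ (f - swapVars i j f) := by
      rw [show ((X j : MvPowerSeries (Fin n) S) - X i) = -((X i : MvPowerSeries (Fin n) S) - X j)
        from (neg_sub _ _).symm]
      exact (neg_dvd).mpr (FGLAux.X_sub_X_dvd hij' f)
    exact dvd_trans h1 h2

end
end

section
/- Let S be a commutative ring, n ≥ 2, and 1 ≤ i ≤ n−1. The S-algebra homomorphism Φ : S[[y_1,…,y_n]] → S[[x_1,…,x_n]] determined by substituting y_j ↦ x_j for j ∉ {i, i+1}, y_i ↦ x_i + x_{i+1}, and y_{i+1} ↦ x_i·x_{i+1} is injective, and its image is exactly the fixed subalgebra R^{s_i} of power series invariant under interchanging x_i and x_{i+1}. That is, every s_i-invariant power series is, in a unique way, a power series in x_1,…,x_{i−1}, x_i + x_{i+1}, x_i·x_{i+1}, x_{i+2},…,x_n. -/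
/- Common setup: substitution of multivariate power series, formal group laws,
formal inverses, and the variable–swapping operation. -/

open MvPowerSeries Finsupp

noncomputable section

variable {S : Type*} [CommRing S]

namespace SymAux

set_option linter.unusedSectionVars false

variable {n : ℕ}

/-- The part of an exponent away from positions `i`, `j`. -/
def off (i j : Fin n) (m : Fin n →₀ ℕ) : Fin n →₀ ℕ := (m.erase i).erase j

/-- Reassemble an exponent from off-part and values at `i`, `j`. -/
def mk (i j : Fin n) (m : Fin n →₀ ℕ) (p b : ℕ) : Fin n →₀ ℕ :=
  off i j m + single i p + single j b

/-- The exponent contributing to the coefficient at `m` with `x_j`-exponent `q`. -/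
def Dm (i j : Fin n) (m : Fin n →₀ ℕ) (q : ℕ) : Fin n →₀ ℕ :=
  mk i j m (m i + m j - 2 * q) q

/-- The substituted family. -/
def subfam (i j : Fin n) : Fin n → MvPowerSeries (Fin n) S := fun l =>
  if l = i then (X i : MvPowerSeries (Fin n) S) + X j
  else if l = j then X i * X j
  else X l

variable {i j : Fin n} (hij : i ≠ j)

lemma off_apply (m : Fin n →₀ ℕ) (l : Fin n) :
    off i j m l = if l = i ∨ l = j then 0 else m l := by
  simp only [off, Finsupp.erase_apply]
  by_cases h1 : l = j <;> by_cases h2 : l = i <;> simp [h1, h2]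

include hij

lemma mk_apply_i (m : Fin n →₀ ℕ) (p b : ℕ) : mk i j m p b i = p := by
  simp [mk, off_apply, Finsupp.single_apply, hij, Ne.symm hij]

lemma mk_apply_j (m : Fin n →₀ ℕ) (p b : ℕ) : mk i j m p b j = b := by
  simp [mk, off_apply, Finsupp.single_apply, hij, Ne.symm hij]

omit hij in
lemma mk_apply_ne (m : Fin n →₀ ℕ) (p b : ℕ) {l : Fin n} (h1 : l ≠ i) (h2 : l ≠ j) :
    mk i j m p b l = m l := by
  simp [mk, off_apply, Finsupp.single_apply, h1, h2, Ne.symm h1, Ne.symm h2]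

lemma mk_self (m : Fin n →₀ ℕ) : mk i j m (m i) (m j) = m := by
  ext l
  by_cases h1 : l = i
  · subst h1; rw [mk_apply_i hij]
  · by_cases h2 : l = j
    · subst h2; rw [mk_apply_j hij]
    · rw [mk_apply_ne _ _ _ h1 h2]

lemma off_mk (m : Fin n →₀ ℕ) (p b : ℕ) : off i j (mk i j m p b) = off i j m := by
  ext l
  rw [off_apply, off_apply]
  by_cases h : l = i ∨ l = j
  · simp [h]
  · push_neg at h
    simp only [h, or_self, if_false, if_neg (not_or_intro h.1 h.2)]
    exact mk_apply_ne _ _ _ h.1 h.2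

omit hij in
lemma mk_eq_mk_of_off_eq {m m' : Fin n →₀ ℕ} (h : off i j m = off i j m') (p b : ℕ) :
    mk i j m p b = mk i j m' p b := by
  simp [mk, h]

lemma Dm_apply_j (m : Fin n →₀ ℕ) (q : ℕ) : Dm i j m q j = q := mk_apply_j hij _ _ _

lemma Dm_apply_i (m : Fin n →₀ ℕ) (q : ℕ) : Dm i j m q i = m i + m j - 2 * q :=
  mk_apply_i hij _ _ _

omit hij in
lemma prod_X_pow (s : Finset (Fin n)) (d : Fin n →₀ ℕ) :
    ∏ l ∈ s, (X l : MvPowerSeries (Fin n) S) ^ d l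
      = monomial (∑ l ∈ s, single l (d l)) 1 := by
  induction s using Finset.cons_induction with
  | empty => rw [Finset.prod_empty, Finset.sum_empty, MvPowerSeries.monomial_zero_one]
  | cons a s ha ih =>
      rw [Finset.prod_cons, ih, Finset.sum_cons, X_pow_eq, monomial_mul_monomial, one_mul]

lemma sum_single_off (m : Fin n →₀ ℕ) :
    ∑ l ∈ (Finset.univ.erase i).erase j, single l (m l) = off i j m := by
  ext t
  rw [Finset.sum_apply']
  simp only [Finsupp.single_apply]
  rw [Finset.sum_ite_eq' ((Finset.univ.erase i).erase j) t m]
  simp only [off, Finsupp.erase_apply, Finset.mem_erase, Finset.mem_univ, and_true]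
  by_cases h1 : t = j <;> by_cases h2 : t = i <;> simp [h1, h2]

/-- Product formula: `∏ l, a l ^ d l` as an explicit sum of monomials. -/
lemma prod_subfam_pow (d : Fin n →₀ ℕ) :
    ∏ l, (subfam i j l : MvPowerSeries (Fin n) S) ^ d l
      = ∑ k ∈ Finset.range (d i + 1),
          monomial (mk i j d (k + d j) (d i + d j - k)) ((d i).choose k : S) := by
  rw [← Finset.mul_prod_erase Finset.univ _ (Finset.mem_univ i),
    ← Finset.mul_prod_erase (Finset.univ.erase i) _
      (Finset.mem_erase.mpr ⟨Ne.symm hij, Finset.mem_univ j⟩)]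
  have hrest : ∏ l ∈ (Finset.univ.erase i).erase j, (subfam i j l : MvPowerSeries (Fin n) S) ^ d l
      = monomial (off i j d) 1 := by
    rw [← sum_single_off hij, ← prod_X_pow]
    refine Finset.prod_congr rfl fun l hl => ?_
    simp only [Finset.mem_erase] at hl
    simp [subfam, hl.1, hl.2.1]
  rw [hrest]
  have hi : (subfam i j i : MvPowerSeries (Fin n) S) = X i + X j := by simp [subfam]
  have hj : (subfam i j j : MvPowerSeries (Fin n) S) = X i * X j := by simp [subfam, Ne.symm hij]
  rw [hi, hj, add_pow, mul_pow, Finset.sum_mul]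
  refine Finset.sum_congr rfl fun k hk => ?_
  rw [Finset.mem_range] at hk
  have hk' : k ≤ d i := Nat.lt_succ_iff.mp hk
  have hcast : ∀ x : ℕ, ((x : ℕ) : MvPowerSeries (Fin n) S) = monomial 0 (x : S) := fun _ => rfl
  simp only [X_pow_eq, hcast, monomial_mul_monomial]
  congr 1
  · have h1 : d i + d j - k = (d i - k) + d j := by omega
    rw [mk, h1, Finsupp.single_add, Finsupp.single_add]
    abel
  · ring

lemma coeff_prod_subfam (d m : Fin n →₀ ℕ) :
    MvPowerSeries.coeff m (∏ l, (subfam i j l : MvPowerSeries (Fin n) S) ^ d l)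
      = if d = Dm i j m (d j) ∧ d j ≤ m i ∧ d j ≤ m j
        then ((m i + m j - 2 * d j).choose (m i - d j) : S) else 0 := by
  rw [prod_subfam_pow hij, map_sum]
  simp only [MvPowerSeries.coeff_monomial]
  by_cases hP : d = Dm i j m (d j) ∧ d j ≤ m i ∧ d j ≤ m j
  · obtain ⟨hd, h1, h2⟩ := hP
    have hoff : off i j d = off i j m := by rw [hd, Dm, off_mk hij]
    have hdi : d i = m i + m j - 2 * d j := by
      conv_lhs => rw [hd, Dm, mk_apply_i hij]
    rw [if_pos ⟨hd, h1, h2⟩]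
    rw [Finset.sum_eq_single_of_mem (m i - d j)]
    · rw [if_pos, hdi]
      have e1 : m i - d j + d j = m i := by omega
      have e2 : d i + d j - (m i - d j) = m j := by omega
      rw [e1, e2, mk_eq_mk_of_off_eq hoff, mk_self hij]
    · rw [Finset.mem_range]; omega
    · intro k hk hkne
      rw [if_neg]
      intro hc
      apply hkne
      have : m i = k + d j := by conv_lhs => rw [hc, mk_apply_i hij]
      omega
  · rw [if_neg hP]
    apply Finset.sum_eq_zero
    intro k hk
    rw [Finset.mem_range] at hk
    rw [if_neg]
    intro hc
    apply hP
    have hmi : m i = k + d j := by conv_lhs => rw [hc, mk_apply_i hij]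
    have hmj : m j = d i + d j - k := by conv_lhs => rw [hc, mk_apply_j hij]
    have hoff : off i j m = off i j d := by rw [hc, off_mk hij]
    have h1 : d j ≤ m i := by omega
    have h2 : d j ≤ m j := by omega
    refine ⟨?_, h1, h2⟩
    have hdi : m i + m j - 2 * d j = d i := by omega
    rw [Dm, hdi, ← mk_eq_mk_of_off_eq hoff.symm, mk_self hij]

omit hij in
lemma apply_le_degree (m : Fin n →₀ ℕ) (l : Fin n) : m l ≤ m.sum fun _ e => e := by
  rw [Finsupp.sum_fintype _ _ (fun _ => rfl)]
  exact Finset.single_le_sum (fun _ _ => Nat.zero_le _) (Finset.mem_univ l)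

lemma add_apply_le_degree (m : Fin n →₀ ℕ) : m i + m j ≤ m.sum fun _ e => e := by
  rw [Finsupp.sum_fintype _ _ (fun _ => rfl)]
  calc m i + m j = ∑ l ∈ ({i, j} : Finset (Fin n)), m l := (Finset.sum_pair hij).symm
    _ ≤ ∑ l, m l := Finset.sum_le_sum_of_subset (Finset.subset_univ _)

lemma Dm_mem_Iic {m : Fin n →₀ ℕ} {q : ℕ} (hq1 : q ≤ m i) (hq2 : q ≤ m j) :
    Dm i j m q ∈ Finset.Iic (equivFunOnFinite.symm fun _ : Fin n => m.sum fun _ e => e) := by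
  rw [Finset.mem_Iic, Finsupp.le_def]
  intro l
  have hT : ∀ t, m t ≤ m.sum fun _ e => e := apply_le_degree m
  simp only [coe_equivFunOnFinite_symm]
  by_cases h1 : l = i
  · subst h1
    rw [Dm, mk_apply_i hij]
    have := add_apply_le_degree hij m
    omega
  · by_cases h2 : l = j
    · subst h2
      rw [Dm, mk_apply_j hij]
      exact le_trans hq2 (hT l)
    · rw [Dm, mk_apply_ne _ _ _ h1 h2]
      exact hT l

/-- Master formula for the coefficients of the substituted series. -/
lemma coeff_msubst (F : MvPowerSeries (Fin n) S) (m : Fin n →₀ ℕ) :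
    MvPowerSeries.coeff m (msubst (subfam i j) F)
      = ∑ q ∈ Finset.range (min (m i) (m j) + 1),
          ((m i + m j - 2 * q).choose (m i - q) : S) * MvPowerSeries.coeff (Dm i j m q) F := by
  have h0 : MvPowerSeries.coeff m (msubst (subfam i j) F)
      = ∑ d ∈ Finset.Iic (equivFunOnFinite.symm fun _ : Fin n => m.sum fun _ e => e),
          MvPowerSeries.coeff d F
            * MvPowerSeries.coeff m (∏ l, (subfam i j l : MvPowerSeries (Fin n) S) ^ d l) := rfl
  rw [h0]
  simp_rw [coeff_prod_subfam hij, mul_ite, mul_zero]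
  rw [← Finset.sum_filter]
  have hset : (Finset.Iic (equivFunOnFinite.symm fun _ : Fin n => m.sum fun _ e => e)).filter
        (fun d => d = Dm i j m (d j) ∧ d j ≤ m i ∧ d j ≤ m j)
      = (Finset.range (min (m i) (m j) + 1)).image (Dm i j m) := by
    ext d
    simp only [Finset.mem_filter, Finset.mem_image, Finset.mem_range]
    constructor
    · rintro ⟨hIic, hd, h1, h2⟩
      exact ⟨d j, by omega, hd.symm⟩
    · rintro ⟨q, hq, rfl⟩
      have hq1 : q ≤ m i := by omega
      have hq2 : q ≤ m j := by omega
      refine ⟨Dm_mem_Iic hij hq1 hq2, ?_, ?_, ?_⟩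
      · rw [Dm_apply_j hij]
      · rw [Dm_apply_j hij]; exact hq1
      · rw [Dm_apply_j hij]; exact hq2
  rw [hset, Finset.sum_image (fun q1 _ q2 _ h => by
    rw [← Dm_apply_j hij m q1, h, Dm_apply_j hij])]
  refine Finset.sum_congr rfl fun q hq => ?_
  rw [Dm_apply_j hij, mul_comm]

omit hij in
lemma swap_apply_i (m : Fin n →₀ ℕ) : equivMapDomain (Equiv.swap i j) m i = m j := by
  simp [Finsupp.equivMapDomain_apply, Equiv.symm_swap, Equiv.swap_apply_left]

omit hij in
lemma swap_apply_j (m : Fin n →₀ ℕ) : equivMapDomain (Equiv.swap i j) m j = m i := by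
  simp [Finsupp.equivMapDomain_apply, Equiv.symm_swap, Equiv.swap_apply_right]

omit hij in
lemma swap_apply_ne (m : Fin n →₀ ℕ) {l : Fin n} (h1 : l ≠ i) (h2 : l ≠ j) :
    equivMapDomain (Equiv.swap i j) m l = m l := by
  simp [Finsupp.equivMapDomain_apply, Equiv.symm_swap, Equiv.swap_apply_of_ne_of_ne h1 h2]

omit hij in
lemma off_swap (m : Fin n →₀ ℕ) :
    off i j (equivMapDomain (Equiv.swap i j) m) = off i j m := by
  ext l
  rw [off_apply, off_apply]
  by_cases h : l = i ∨ l = j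
  · simp [h]
  · push_neg at h
    rw [if_neg (not_or_intro h.1 h.2), if_neg (not_or_intro h.1 h.2),
      swap_apply_ne m h.1 h.2]

lemma Dm_swap (m : Fin n →₀ ℕ) (q : ℕ) :
    Dm i j (equivMapDomain (Equiv.swap i j) m) q = Dm i j m q := by
  rw [Dm, Dm, swap_apply_i, swap_apply_j, Nat.add_comm (m j) (m i)]
  exact mk_eq_mk_of_off_eq (off_swap m) _ _

/-- Symmetry of coefficients of any series in the image. -/
lemma coeff_msubst_symm (F : MvPowerSeries (Fin n) S) (m : Fin n →₀ ℕ) :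
    MvPowerSeries.coeff (equivMapDomain (Equiv.swap i j) m) (msubst (subfam i j) F)
      = MvPowerSeries.coeff m (msubst (subfam i j) F) := by
  rw [coeff_msubst hij, coeff_msubst hij]
  rw [swap_apply_i, swap_apply_j, Nat.min_comm (m j) (m i), Nat.add_comm (m j) (m i)]
  refine Finset.sum_congr rfl fun q hq => ?_
  rw [Finset.mem_range] at hq
  rw [Dm_swap hij]
  congr 2
  have h1 : m j - q = (m i + m j - 2 * q) - (m i - q) := by omega
  rw [h1, Nat.choose_symm (by omega)]

/-- Injectivity. -/
lemma msubst_injective :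
    Function.Injective (msubst (subfam i j) : MvPowerSeries (Fin n) S → _) := by
  intro F G hFG
  have key : ∀ b : ℕ, ∀ d : Fin n →₀ ℕ, d j = b →
      MvPowerSeries.coeff d F = MvPowerSeries.coeff d G := by
    intro b
    induction b using Nat.strong_induction_on with
    | _ b IH =>
      intro d hd
      set m : Fin n →₀ ℕ := mk i j d (d i + d j) (d j) with hm
      have hmi : m i = d i + d j := mk_apply_i hij _ _ _
      have hmj : m j = d j := mk_apply_j hij _ _ _
      have hcoeff : MvPowerSeries.coeff m (msubst (subfam i j) F)
          = MvPowerSeries.coeff m (msubst (subfam i j) G) := by rw [hFG]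
      rw [coeff_msubst hij, coeff_msubst hij] at hcoeff
      have hmin : min (m i) (m j) = d j := by omega
      rw [hmin, Finset.sum_range_succ, Finset.sum_range_succ] at hcoeff
      have hDtop : Dm i j m (d j) = d := by
        have h1 : m i + m j - 2 * d j = d i := by omega
        have h2 : off i j m = off i j d := off_mk hij d _ _
        rw [Dm, h1, mk_eq_mk_of_off_eq h2]
        exact mk_self hij d
      have hC : ((m i + m j - 2 * d j).choose (m i - d j) : S) = 1 := by
        have h1 : m i + m j - 2 * d j = d i := by omega
        have h2 : m i - d j = d i := by omega
        rw [h1, h2, Nat.choose_self, Nat.cast_one]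
      have hlow : ∑ q ∈ Finset.range (d j),
            ((m i + m j - 2 * q).choose (m i - q) : S)
              * MvPowerSeries.coeff (Dm i j m q) F
          = ∑ q ∈ Finset.range (d j),
            ((m i + m j - 2 * q).choose (m i - q) : S)
              * MvPowerSeries.coeff (Dm i j m q) G := by
        refine Finset.sum_congr rfl fun q hq => ?_
        rw [Finset.mem_range] at hq
        rw [IH q (by omega) (Dm i j m q) (Dm_apply_j hij m q)]
      rw [hDtop, hC, one_mul, one_mul, hlow] at hcoeff
      exact add_left_cancel hcoeff
  exact MvPowerSeries.ext fun d => key (d j) d rfl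

/-- Coefficients of a preimage, defined by recursion on the exponent `b` of `x_j`. -/
noncomputable def G (i j : Fin n) (f : MvPowerSeries (Fin n) S) : ℕ → ℕ → (Fin n →₀ ℕ) → S
  | b, p, e =>
      MvPowerSeries.coeff (e + single i (p + b) + single j b) f
        - ∑ q ∈ (Finset.range b).attach,
            ((p + 2 * b - 2 * q.1).choose (p + b - q.1) : S)
              * G i j f q.1 (p + 2 * b - 2 * q.1) e
  termination_by b => b
  decreasing_by exact Finset.mem_range.mp q.2

/-- The candidate preimage power series. -/
noncomputable def Fpre (i j : Fin n) (f : MvPowerSeries (Fin n) S) :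
    MvPowerSeries (Fin n) S :=
  fun d => G i j f (d j) (d i) (off i j d)

lemma coeff_Fpre_Dm (f : MvPowerSeries (Fin n) S) (m : Fin n →₀ ℕ) (q : ℕ) :
    MvPowerSeries.coeff (Dm i j m q) (Fpre i j f)
      = G i j f q (m i + m j - 2 * q) (off i j m) := by
  have h0 : MvPowerSeries.coeff (Dm i j m q) (Fpre i j f)
      = G i j f (Dm i j m q j) (Dm i j m q i) (off i j (Dm i j m q)) := rfl
  rw [h0, Dm_apply_j hij, Dm_apply_i hij, Dm, off_mk hij]

lemma coeff_msubst_Fpre (f : MvPowerSeries (Fin n) S) (m : Fin n →₀ ℕ) (h : m j ≤ m i) :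
    MvPowerSeries.coeff m (msubst (subfam i j) (Fpre i j f))
      = MvPowerSeries.coeff m f := by
  rw [coeff_msubst hij]
  have hmin : min (m i) (m j) = m j := by omega
  rw [hmin, Finset.sum_range_succ]
  have htop : m i + m j - 2 * m j = m i - m j := by omega
  have hC : ((m i + m j - 2 * m j).choose (m i - m j) : S) = 1 := by
    rw [htop, Nat.choose_self, Nat.cast_one]
  rw [hC, one_mul, coeff_Fpre_Dm hij, htop]
  rw [G]
  have hmono : off i j m + single i (m i - m j + m j) + single j (m j) = m := by
    have h1 : m i - m j + m j = m i := by omega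
    rw [h1]
    exact mk_self hij m
  rw [hmono]
  rw [Finset.sum_attach (Finset.range (m j)) (fun q =>
    ((m i - m j + 2 * m j - 2 * q).choose (m i - m j + m j - q) : S)
      * G i j f q (m i - m j + 2 * m j - 2 * q) (off i j m))]
  have hsum : ∑ q ∈ Finset.range (m j),
        ((m i + m j - 2 * q).choose (m i - q) : S)
          * MvPowerSeries.coeff (Dm i j m q) (Fpre i j f)
      = ∑ q ∈ Finset.range (m j),
        ((m i - m j + 2 * m j - 2 * q).choose (m i - m j + m j - q) : S)
          * G i j f q (m i - m j + 2 * m j - 2 * q) (off i j m) := by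
    refine Finset.sum_congr rfl fun q hq => ?_
    rw [Finset.mem_range] at hq
    have e1 : m i - m j + 2 * m j - 2 * q = m i + m j - 2 * q := by omega
    have e2 : m i - m j + m j - q = m i - q := by omega
    rw [e1, e2, coeff_Fpre_Dm hij]
  rw [hsum]
  ring

end SymAux

/-- the substitution homomorphism
`Φ : S[[y_1,…,y_n]] → S[[x_1,…,x_n]]`, `y_i ↦ x_i + x_{i+1}`, `y_{i+1} ↦ x_i·x_{i+1}`,
`y_l ↦ x_l` otherwise, is injective with image exactly the `s_i`-invariant power series. -/
theorem subst_injective_range_eq_fixed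
    {n : ℕ} (i j : Fin n) (hij : (i : ℕ) + 1 = (j : ℕ)) :
    Function.Injective
      (msubst (fun l : Fin n =>
        if l = i then (X i : MvPowerSeries (Fin n) S) + X j
        else if l = j then X i * X j
        else X l)) ∧
    Set.range
      (msubst (fun l : Fin n =>
        if l = i then (X i : MvPowerSeries (Fin n) S) + X j
        else if l = j then X i * X j
        else X l))
      = {f : MvPowerSeries (Fin n) S | swapVars i j f = f} := by
  have hne : i ≠ j := by
    intro h
    rw [h] at hij
    omega
  have hfun : (fun l : Fin n =>
      if l = i then (X i : MvPowerSeries (Fin n) S) + X j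
      else if l = j then X i * X j
      else X l) = SymAux.subfam i j := rfl
  rw [hfun]
  constructor
  · exact SymAux.msubst_injective hne
  · ext f
    simp only [Set.mem_range, Set.mem_setOf_eq]
    constructor
    · rintro ⟨F, rfl⟩
      funext m
      exact SymAux.coeff_msubst_symm hne F m
    · intro hf
      refine ⟨SymAux.Fpre i j f, ?_⟩
      apply MvPowerSeries.ext
      intro m
      by_cases h : m j ≤ m i
      · exact SymAux.coeff_msubst_Fpre hne f m h
      · have h' := SymAux.coeff_msubst_Fpre hne f (equivMapDomain (Equiv.swap i j) m)
          (by rw [SymAux.swap_apply_i, SymAux.swap_apply_j]; omega)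
        rw [← SymAux.coeff_msubst_symm hne (SymAux.Fpre i j f) m, h']
        exact congrFun hf m

end
end

section
/- Let S be a commutative ring, n ≥ 2, and 1 ≤ i ≤ n−1. Then R = S[[x_1,…,x_n]] is a free module of rank two over the fixed subalgebra R^{s_i} with basis {1, x_i}: every f ∈ R can be written uniquely as f = a + b·x_i with a, b ∈ R^{s_i}. -/
/- Common setup: substitution of multivariate power series, formal group laws,
formal inverses, and the variable–swapping operation. -/

open MvPowerSeries Finsupp

noncomputable section

variable {S : Type*} [CommRing S]

namespace Free2Aux

variable {S : Type*} [CommRing S] {n : ℕ}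

/-- Set the values of `m` at `i` and `j` to `r` and `s`. -/
noncomputable def upd (i j : Fin n) (m : Fin n →₀ ℕ) (r s : ℕ) : Fin n →₀ ℕ :=
  Finsupp.update (Finsupp.update m i r) j s

variable {i j : Fin n}

lemma upd_apply_i (hne : i ≠ j) (m : Fin n →₀ ℕ) (r s : ℕ) : upd i j m r s i = r := by
  classical
  rw [upd, Finsupp.coe_update, Function.update_apply, if_neg hne,
    Finsupp.coe_update, Function.update_self]

lemma upd_apply_j (m : Fin n →₀ ℕ) (r s : ℕ) : upd i j m r s j = s := by
  classical
  simp [upd, Finsupp.coe_update]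

lemma upd_apply_other (m : Fin n →₀ ℕ) (r s : ℕ) {k : Fin n} (hki : k ≠ i) (hkj : k ≠ j) :
    upd i j m r s k = m k := by
  classical
  simp [upd, Finsupp.coe_update, Function.update_apply, hki, hkj]

lemma upd_congr (hne : i ≠ j) {m m' : Fin n →₀ ℕ} (h : ∀ k, k ≠ i → k ≠ j → m k = m' k) (r s : ℕ) :
    upd i j m r s = upd i j m' r s := by
  ext k
  by_cases hki : k = i
  · subst hki; rw [upd_apply_i hne, upd_apply_i hne]
  · by_cases hkj : k = j
    · subst hkj; rw [upd_apply_j, upd_apply_j]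
    · rw [upd_apply_other m r s hki hkj, upd_apply_other m' r s hki hkj, h k hki hkj]

lemma upd_self (hne : i ≠ j) (m : Fin n →₀ ℕ) : upd i j m (m i) (m j) = m := by
  ext k
  by_cases hki : k = i
  · subst hki; rw [upd_apply_i hne]
  · by_cases hkj : k = j
    · subst hkj; rw [upd_apply_j]
    · rw [upd_apply_other m _ _ hki hkj]

/-- Abbreviation for the swapped monomial. -/
noncomputable def sw (i j : Fin n) (m : Fin n →₀ ℕ) : Fin n →₀ ℕ :=
  equivMapDomain (Equiv.swap i j) m

lemma sw_apply (m : Fin n →₀ ℕ) (k : Fin n) : sw i j m k = m (Equiv.swap i j k) := by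
  rw [sw, equivMapDomain_apply, Equiv.symm_swap]

lemma sw_apply_i (m : Fin n →₀ ℕ) : sw i j m i = m j := by
  rw [sw_apply, Equiv.swap_apply_left]

lemma sw_apply_j (m : Fin n →₀ ℕ) : sw i j m j = m i := by
  rw [sw_apply, Equiv.swap_apply_right]

lemma sw_apply_other (m : Fin n →₀ ℕ) {k : Fin n} (hki : k ≠ i) (hkj : k ≠ j) :
    sw i j m k = m k := by
  rw [sw_apply, Equiv.swap_apply_of_ne_of_ne hki hkj]

lemma sw_eq_upd (hne : i ≠ j) (m : Fin n →₀ ℕ) : sw i j m = upd i j m (m j) (m i) := by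
  ext k
  by_cases hki : k = i
  · subst hki; rw [sw_apply_i, upd_apply_i hne]
  · by_cases hkj : k = j
    · subst hkj; rw [sw_apply_j, upd_apply_j]
    · rw [sw_apply_other m hki hkj, upd_apply_other m _ _ hki hkj]


lemma coeff_mul_X' (φ : MvPowerSeries (Fin n) S) (s : Fin n) (m : Fin n →₀ ℕ) :
    (φ * X s : MvPowerSeries (Fin n) S) m = if 1 ≤ m s then φ (m - single s 1) else 0 := by
  have h0 : (φ * X s : MvPowerSeries (Fin n) S) m = MvPowerSeries.coeff m (φ * X s) := rfl
  rw [h0, X_def, MvPowerSeries.coeff_mul_monomial]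
  by_cases h : 1 ≤ m s
  · rw [if_pos (Finsupp.single_le_iff.mpr h), if_pos h, mul_one]; rfl
  · rw [if_neg (fun hh => h (Finsupp.single_le_iff.mp hh)), if_neg h]

/-- The coefficient function of the "odd part" `b` of `f`. -/
noncomputable def bfun (i j : Fin n) (f : MvPowerSeries (Fin n) S) :
    MvPowerSeries (Fin n) S :=
  fun m =>
    (∑ r ∈ Finset.range (m i + m j + 2), f (upd i j m r (m i + m j + 1 - r)))
      - (∑ r ∈ Finset.range (m i + 1), f (upd i j m r (m i + m j + 1 - r)))
      - (∑ r ∈ Finset.range (m j + 1), f (upd i j m r (m i + m j + 1 - r)))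

lemma bfun_sw (hne : i ≠ j) (f : MvPowerSeries (Fin n) S) (m : Fin n →₀ ℕ) :
    bfun i j f (sw i j m) = bfun i j f m := by
  have hu : ∀ r s, upd i j (sw i j m) r s = upd i j m r s := fun r s =>
    upd_congr hne (fun k hki hkj => sw_apply_other m hki hkj) r s
  simp only [bfun, sw_apply_i, sw_apply_j, hu, add_comm (m j) (m i)]
  exact sub_right_comm _ _ _

lemma sub_single_other (hne : i ≠ j) (m : Fin n →₀ ℕ) {k l : Fin n} (hkl : l ≠ k) :
    (m - single k 1 : Fin n →₀ ℕ) l = m l := by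
  rw [tsub_apply, single_apply, if_neg (fun h => hkl h.symm), Nat.sub_zero]

lemma sub_single_same (m : Fin n →₀ ℕ) (k : Fin n) : (m - single k 1 : Fin n →₀ ℕ) k = m k - 1 := by
  rw [tsub_apply, single_apply, if_pos rfl]

lemma bfun_mul_Xi (hne : i ≠ j) (f : MvPowerSeries (Fin n) S) (m : Fin n →₀ ℕ)
    (hp : 1 ≤ m i) :
    (bfun i j f * X i : MvPowerSeries (Fin n) S) m =
      (∑ r ∈ Finset.range (m i + m j + 1), f (upd i j m r (m i + m j - r)))
        - (∑ r ∈ Finset.range (m i), f (upd i j m r (m i + m j - r)))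
        - (∑ r ∈ Finset.range (m j + 1), f (upd i j m r (m i + m j - r))) := by
  rw [coeff_mul_X', if_pos hp]
  have hu : ∀ r s, upd i j (m - single i 1) r s = upd i j m r s := fun r s =>
    upd_congr hne (fun k hki hkj => sub_single_other hne m (fun h => hki h)) r s
  have e1 : m i - 1 + m j + 2 = m i + m j + 1 := by omega
  have e2 : m i - 1 + 1 = m i := by omega
  have e3 : m i - 1 + m j + 1 = m i + m j := by omega
  simp only [bfun, sub_single_same, sub_single_other hne m hne.symm, hu, e1, e2, e3]

lemma bfun_mul_Xj (hne : i ≠ j) (f : MvPowerSeries (Fin n) S) (m : Fin n →₀ ℕ)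
    (hq : 1 ≤ m j) :
    (bfun i j f * X j : MvPowerSeries (Fin n) S) m =
      (∑ r ∈ Finset.range (m i + m j + 1), f (upd i j m r (m i + m j - r)))
        - (∑ r ∈ Finset.range (m i + 1), f (upd i j m r (m i + m j - r)))
        - (∑ r ∈ Finset.range (m j), f (upd i j m r (m i + m j - r))) := by
  rw [coeff_mul_X', if_pos hq]
  have hu : ∀ r s, upd i j (m - single j 1) r s = upd i j m r s := fun r s =>
    upd_congr hne (fun k hki hkj => sub_single_other hne m (fun h => hkj h)) r s
  have e1 : m i + (m j - 1) + 2 = m i + m j + 1 := by omega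
  have e2 : m j - 1 + 1 = m j := by omega
  have e3 : m i + (m j - 1) + 1 = m i + m j := by omega
  simp only [bfun, sub_single_same, sub_single_other hne m hne, hu, e1, e2, e3]

lemma G_mi (hne : i ≠ j) (f : MvPowerSeries (Fin n) S) (m : Fin n →₀ ℕ) :
    f (upd i j m (m i) (m i + m j - m i)) = f m := by
  rw [Nat.add_sub_cancel_left, upd_self hne]

lemma G_mj (hne : i ≠ j) (f : MvPowerSeries (Fin n) S) (m : Fin n →₀ ℕ) :
    f (upd i j m (m j) (m i + m j - m j)) = f (sw i j m) := by
  rw [Nat.add_sub_cancel, sw_eq_upd hne]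

lemma key (hne : i ≠ j) (f : MvPowerSeries (Fin n) S) (m : Fin n →₀ ℕ) :
    f m - f (sw i j m) = (bfun i j f * X i : MvPowerSeries (Fin n) S) m - (bfun i j f * X j : MvPowerSeries (Fin n) S) m := by
  by_cases hp : 1 ≤ m i
  · by_cases hq : 1 ≤ m j
    · rw [bfun_mul_Xi hne f m hp, bfun_mul_Xj hne f m hq]
      rw [Finset.sum_range_succ (n := m i), Finset.sum_range_succ (n := m j)]
      rw [G_mi hne f m, G_mj hne f m]
      ring
    · have hq0 : m j = 0 := by omega
      rw [bfun_mul_Xi hne f m hp, coeff_mul_X', if_neg hq]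
      have h1 := G_mi hne f m
      have h2 := G_mj hne f m
      simp only [hq0, Nat.add_zero, Nat.zero_add] at h1 h2 ⊢
      rw [Finset.sum_range_succ, Finset.sum_range_one, h1, h2]
      ring
  · have hp0 : m i = 0 := by omega
    by_cases hq : 1 ≤ m j
    · rw [bfun_mul_Xj hne f m hq, coeff_mul_X', if_neg hp]
      have h1 := G_mi hne f m
      have h2 := G_mj hne f m
      simp only [hp0, Nat.add_zero, Nat.zero_add] at h1 h2 ⊢
      rw [Finset.sum_range_succ, Finset.sum_range_one, h2, h1]
      ring
    · have hq0 : m j = 0 := by omega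
      have hm : sw i j m = m := by
        rw [sw_eq_upd hne]
        calc upd i j m (m j) (m i) = upd i j m (m i) (m j) := by rw [hp0, hq0]
          _ = m := upd_self hne m
      rw [coeff_mul_X', coeff_mul_X', if_neg hp, if_neg hq, hm, sub_self, sub_self]

lemma sw_sub_single (hne : i ≠ j) (m : Fin n →₀ ℕ) :
    sw i j m - single i 1 = sw i j (m - single j 1) := by
  ext k
  by_cases hki : k = i
  · subst hki
    rw [sub_single_same, sw_apply_i, sw_apply_i, sub_single_same]
  · by_cases hkj : k = j
    · subst hkj
      rw [sub_single_other hne _ hne.symm, sw_apply_j, sw_apply_j,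
        sub_single_other hne _ hne]
    · rw [sub_single_other hne _ (fun h => hki h), sw_apply_other _ hki hkj,
        sw_apply_other _ hki hkj, sub_single_other hne _ (fun h => hkj h)]

lemma mul_X_sw (hne : i ≠ j) {c : MvPowerSeries (Fin n) S}
    (hc : ∀ m, c (sw i j m) = c m) (m : Fin n →₀ ℕ) :
    (c * X i : MvPowerSeries (Fin n) S) (sw i j m) = (c * X j : MvPowerSeries (Fin n) S) m := by
  rw [coeff_mul_X', coeff_mul_X', sw_apply_i]
  by_cases hq : 1 ≤ m j
  · rw [if_pos hq, if_pos hq, sw_sub_single hne, hc]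
  · rw [if_neg hq, if_neg hq]

end Free2Aux

/-- `R = S[[x_1,…,x_n]]` is free of rank two over the fixed subalgebra
`R^{s_i}` with basis `{1, x_i}`: every `f` is uniquely `f = a + b·x_i` with `a, b`
invariant under interchanging `x_i` and `x_{i+1}`. -/
theorem free_rank_two_over_fixed
    {n : ℕ} (i j : Fin n) (hij : (i : ℕ) + 1 = (j : ℕ))
    (f : MvPowerSeries (Fin n) S) :
    ∃! p : MvPowerSeries (Fin n) S × MvPowerSeries (Fin n) S,
      swapVars i j p.1 = p.1 ∧ swapVars i j p.2 = p.2 ∧ f = p.1 + p.2 * X i := by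
  classical
  have hne : i ≠ j := by
    intro h; rw [h] at hij; omega
  have hsub : ∀ (x y : MvPowerSeries (Fin n) S) (m : Fin n →₀ ℕ), (x - y) m = x m - y m :=
    fun x y m => map_sub (MvPowerSeries.coeff m) x y
  have hswap : ∀ (g : MvPowerSeries (Fin n) S), swapVars i j g = g ↔
      ∀ m, g (Free2Aux.sw i j m) = g m := fun g =>
    ⟨fun h m => congrFun h m, fun h => funext fun m => h m⟩
  set b := Free2Aux.bfun i j f with hbdef
  set a := f - b * X i with hadef
  have hb : ∀ m, b (Free2Aux.sw i j m) = b m := fun m => Free2Aux.bfun_sw hne f m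
  have ha : ∀ m, a (Free2Aux.sw i j m) = a m := by
    intro m
    have h1 := Free2Aux.key hne f m
    have h2 := Free2Aux.mul_X_sw (S := S) hne hb m
    rw [hadef, hsub, hsub, h2]
    linear_combination -h1
  have hf : f = a + b * X i := by rw [hadef]; ring
  refine ⟨(a, b), ⟨(hswap a).mpr ha, (hswap b).mpr hb, hf⟩, ?_⟩
  rintro ⟨a', b'⟩ ⟨ha', hb', hf'⟩
  have hab : a' + b' * X i = a + b * X i := by rw [← hf, ← hf']
  set c := b' - b with hcdef
  have hcsym : ∀ m, c (Free2Aux.sw i j m) = c m := by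
    intro m
    rw [hcdef, hsub, hsub, hb m, (hswap b').mp hb' m]
  have hcXi : c * X i = a - a' := by rw [hcdef]; linear_combination hab
  have hcc : ∀ m, (c * X i : MvPowerSeries (Fin n) S) m = (c * X j : MvPowerSeries (Fin n) S) m := by
    intro m
    have h2 := Free2Aux.mul_X_sw (S := S) hne hcsym m
    rw [← h2, hcXi, hsub, hsub, (hswap a').mp ha' m, ha m]
  have hmi : ∀ m : Fin n →₀ ℕ, (m + single i 1 : Fin n →₀ ℕ) i = m i + 1 := by
    intro m; rw [Finsupp.add_apply, Finsupp.single_apply, if_pos rfl]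
  have hmj : ∀ m : Fin n →₀ ℕ, (m + single i 1 : Fin n →₀ ℕ) j = m j := by
    intro m; rw [Finsupp.add_apply, Finsupp.single_apply, if_neg hne, Nat.add_zero]
  have hcm : ∀ m : Fin n →₀ ℕ, (c * X i : MvPowerSeries (Fin n) S) (m + single i 1) = c m := by
    intro m
    rw [Free2Aux.coeff_mul_X', if_pos (by rw [hmi m]; omega), add_tsub_cancel_right]
  have hzero : ∀ (q : ℕ) (m : Fin n →₀ ℕ), m j = q → c m = 0 := by
    intro q
    induction q with
    | zero =>
      intro m hm
      rw [← hcm m, hcc, Free2Aux.coeff_mul_X', if_neg (by rw [hmj m, hm]; omega)]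
    | succ q ih =>
      intro m hm
      rw [← hcm m, hcc, Free2Aux.coeff_mul_X', if_pos (by rw [hmj m, hm]; omega)]
      refine ih _ ?_
      rw [Finsupp.tsub_apply, Finsupp.single_apply, if_pos rfl, hmj m, hm]
      omega
  have hc0 : c = 0 := by
    refine MvPowerSeries.ext fun m => ?_
    rw [MvPowerSeries.coeff_apply, map_zero, hzero (m j) m rfl]
  have hbb : b' = b := by
    have := sub_eq_zero.mp (hcdef ▸ hc0)
    exact this
  have haa : a' = a := by
    rw [hbb] at hab
    exact add_right_cancel hab
  rw [Prod.mk.injEq]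
  exact ⟨haa, hbb⟩

end
end
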